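/- arXiv:1512.05144 — 4 statements merged into one kernel-verified Lean document; each statement's English description precedes it below -/
import Mathlib

section
/- Let f : ℂ → ℂ be a nonconstant entire function, let U ⊆ ℂ be open, and let φ : ℂ → [0,∞) be a measurable function. Then ∫_{f(U)} φ(w) dA(w) ≤ ∫_U φ(f(z)) · |f'(z)|² dA(z), where dA is planar Lebesgue measure (in particular f(U) is open, hence measurable). -/
open MeasureTheory Set

theorem stmt_1 (f : ℂ → ℂ) (hf : Differentiable ℂ f)
    (hnc : ¬ ∃ c : ℂ, f = Function.const ℂ c)
    (U : Set ℂ) (hU : IsOpen U) (φ : ℂ → ENNReal) (hφ : Measurable φ) :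
    ∫⁻ w in f '' U, φ w ≤ ∫⁻ z in U, φ (f z) * ENNReal.ofReal (‖deriv f z‖ ^ 2) := by
  classical
  have hcd : ContDiff ℂ 2 f := hf.contDiff
  -- the real Fréchet derivative of f
  set F' : ℂ → ℂ →L[ℝ] ℂ :=
    fun z => (ContinuousLinearMap.smulRight (1 : ℂ →L[ℂ] ℂ) (deriv f z)).restrictScalars ℝ with hF'
  have hfd : ∀ z, HasFDerivAt f (F' z) z := fun z =>
    ((hf z).hasDerivAt.hasFDerivAt).restrictScalars ℝ
  have hdet : ∀ z, (F' z).det = ‖deriv f z‖ ^ 2 := by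
    intro z
    have hcoe : ((F' z) : ℂ →ₗ[ℝ] ℂ) = Algebra.lmul ℝ ℂ (deriv f z) := by
      ext w
      simp [hF', mul_comm]
    rw [ContinuousLinearMap.det, hcoe]
    have := Algebra.norm_complex_apply (deriv f z)
    rw [Algebra.norm_apply] at this
    rw [this, Complex.normSq_eq_norm_sq]
  -- the critical set
  set C : Set ℂ := {z | deriv f z = 0} with hC
  have hC_closed : IsClosed C :=
    isClosed_eq (hcd.continuous_deriv one_le_two) continuous_const
  -- image of critical points is null (Sard)
  have hnull : volume (f '' (U ∩ C)) = 0 := by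
    apply addHaar_image_eq_zero_of_det_fderivWithin_eq_zero volume
      (f' := F') (fun x _ => (hfd x).hasFDerivWithinAt)
    intro x hx
    rw [hdet x, hx.2]
    simp
  -- the good set
  set s : Set ℂ := U \ C with hs
  have hs_open : IsOpen s := hU.sdiff hC_closed
  -- local injectivity around each point of s
  have hnbhd : ∀ x ∈ s, ∃ V : Set ℂ, IsOpen V ∧ x ∈ V ∧ InjOn f V := by
    intro x hx
    have h0 : deriv f x ≠ 0 := hx.2
    have hst : HasStrictDerivAt f (deriv f x) x :=
      hcd.contDiffAt.hasStrictDerivAt two_ne_zero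
    set e := (hst.hasStrictFDerivAt_equiv h0).toOpenPartialHomeomorph f with he
    refine ⟨e.source, e.open_source, ?_, ?_⟩
    · exact (hst.hasStrictFDerivAt_equiv h0).mem_toOpenPartialHomeomorph_source
    · have : (e : ℂ → ℂ) = f := (hst.hasStrictFDerivAt_equiv h0).toOpenPartialHomeomorph_coe
      rw [← this]
      exact e.injOn
  choose! V hVopen hVmem hVinj using hnbhd
  -- countable cover of s
  obtain ⟨t, hts, htc, hcov⟩ : ∃ t ⊆ s, t.Countable ∧ s ⊆ ⋃ x ∈ t, V x :=
    TopologicalSpace.countable_cover_nhdsWithin (fun x hx =>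
      mem_nhdsWithin_of_mem_nhds ((hVopen x hx).mem_nhds (hVmem x hx)))
  -- collection of injectivity pieces, made ℕ-indexed
  set S : Set (Set ℂ) := insert ∅ ((fun x => V x ∩ s) '' t) with hS
  have hSc : S.Countable := (htc.image _).insert _
  have hSne : S.Nonempty := ⟨∅, mem_insert _ _⟩
  obtain ⟨g, hg⟩ := Set.Countable.exists_eq_range hSc hSne
  have hg_mem : ∀ n, g n ∈ S := fun n => by rw [hg]; exact mem_range_self n
  have hg_sub : ∀ n, g n ⊆ s := by
    intro n
    rcases hg_mem n with h | ⟨x, _, heq⟩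
    · simp [h]
    · rw [← heq]; exact inter_subset_right
  have hg_meas : ∀ n, MeasurableSet (g n) := by
    intro n
    rcases hg_mem n with h | ⟨x, hx, heq⟩
    · simp [h]
    · rw [← heq]; exact ((hVopen x (hts hx)).inter hs_open).measurableSet
  have hg_inj : ∀ n, InjOn f (g n) := by
    intro n
    rcases hg_mem n with h | ⟨x, hx, heq⟩
    · simp [h, Set.injOn_empty]
    · rw [← heq]; exact (hVinj x (hts hx)).mono inter_subset_left
  have hg_cover : (⋃ n, g n) = s := by
    apply Subset.antisymm (iUnion_subset hg_sub)
    intro z hz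
    obtain ⟨x, hx, hzV⟩ := mem_iUnion₂.1 (hcov hz)
    have : V x ∩ s ∈ S := mem_insert_of_mem _ (mem_image_of_mem _ hx)
    rw [hg] at this
    obtain ⟨n, hn⟩ := this
    exact mem_iUnion.2 ⟨n, hn ▸ ⟨hzV, hz⟩⟩
  -- disjointify
  set D : ℕ → Set ℂ := disjointed g with hD
  have hD_meas : ∀ n, MeasurableSet (D n) := MeasurableSet.disjointed hg_meas
  have hD_disj : Pairwise (Function.onFun Disjoint D) := disjoint_disjointed g
  have hD_sub : ∀ n, D n ⊆ g n := disjointed_subset g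
  have hD_cover : (⋃ n, D n) = s := by rw [hD, iUnion_disjointed, hg_cover]
  have hsub_s : ∀ n, D n ⊆ s := fun n => (hD_sub n).trans (hg_sub n)
  -- main computation
  have himg : f '' U = f '' (U ∩ C) ∪ f '' s := by
    rw [← image_union, inter_union_diff]
  calc ∫⁻ w in f '' U, φ w = ∫⁻ w in f '' (U ∩ C) ∪ f '' s, φ w := by rw [himg]
    _ ≤ (∫⁻ w in f '' (U ∩ C), φ w) + ∫⁻ w in f '' s, φ w := lintegral_union_le _ _ _
    _ = ∫⁻ w in f '' s, φ w := by
        rw [setLIntegral_measure_zero _ _ hnull, zero_add]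
    _ = ∫⁻ w in ⋃ n, f '' (D n), φ w := by rw [← image_iUnion, hD_cover]
    _ ≤ ∑' n, ∫⁻ w in f '' (D n), φ w := lintegral_iUnion_le _ _
    _ = ∑' n, ∫⁻ z in D n, φ (f z) * ENNReal.ofReal (‖deriv f z‖ ^ 2) := by
        refine tsum_congr fun n => ?_
        rw [lintegral_image_eq_lintegral_abs_det_fderiv_mul volume (hD_meas n)
          (fun x _ => (hfd x).hasFDerivWithinAt) (hg_inj n |>.mono (hD_sub n)) φ]
        refine setLIntegral_congr_fun (hD_meas n) (fun x _ => ?_)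
        rw [hdet x, abs_of_nonneg (by positivity), mul_comm]
    _ = ∫⁻ z in ⋃ n, D n, φ (f z) * ENNReal.ofReal (‖deriv f z‖ ^ 2) := by
        rw [lintegral_iUnion hD_meas hD_disj]
    _ ≤ ∫⁻ z in U, φ (f z) * ENNReal.ofReal (‖deriv f z‖ ^ 2) := by
        apply lintegral_mono_set
        rw [hD_cover]
        exact diff_subset
end

section
/- Let f(z) = exp(z) be the complex exponential. For every x ∈ ℝ and every r > 0, (1/n) · log S(f^n, D(x,r)) → +∞ as n → ∞. -/
open MeasureTheory Filter

/-- The spherical area `S(f, U) = (1/π) ∫_U |f'|²/(1+|f|²)² dA`. -/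
noncomputable def sphArea (f : ℂ → ℂ) (U : Set ℂ) : ℝ :=
  (1 / Real.pi) * ∫ z in U, ‖deriv f z‖ ^ 2 / (1 + ‖f z‖ ^ 2) ^ 2

namespace SphAux

open Set Real

/-! ### Generalities about the spherical density -/

noncomputable def dens (g : ℂ → ℂ) (z : ℂ) : ℝ := ‖deriv g z‖ ^ 2 / (1 + ‖g z‖ ^ 2) ^ 2

lemma sphArea_eq (g : ℂ → ℂ) (U : Set ℂ) :
    sphArea g U = (1 / Real.pi) * ∫ z in U, dens g z := rfl

lemma dens_nonneg (g : ℂ → ℂ) (z : ℂ) : 0 ≤ dens g z := by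
  unfold dens; positivity

lemma continuous_dens {g : ℂ → ℂ} (hg : ContDiff ℂ ⊤ g) : Continuous (dens g) := by
  apply Continuous.div
  · exact ((hg.continuous_deriv le_top).norm.pow 2)
  · exact ((continuous_const.add (hg.continuous.norm.pow 2)).pow 2)
  · intro z
    positivity

lemma integrableOn_dens {g : ℂ → ℂ} (hg : ContDiff ℂ ⊤ g) {s : Set ℂ} {c : ℂ} {R : ℝ}
    (hs : s ⊆ Metric.closedBall c R) : IntegrableOn (dens g) s :=
  (((continuous_dens hg).continuousOn).integrableOn_compact (isCompact_closedBall c R)).mono_set hs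

lemma sphArea_nonneg (g : ℂ → ℂ) (U : Set ℂ) : 0 ≤ sphArea g U := by
  rw [sphArea_eq]
  have : 0 ≤ ∫ z in U, dens g z := integral_nonneg (fun z => dens_nonneg g z)
  positivity

lemma sphArea_mono {g : ℂ → ℂ} (hg : ContDiff ℂ ⊤ g) {s t : Set ℂ} {c : ℂ} {R : ℝ}
    (hst : s ⊆ t) (ht : t ⊆ Metric.closedBall c R) : sphArea g s ≤ sphArea g t := by
  rw [sphArea_eq, sphArea_eq]
  have h1 : (0:ℝ) ≤ 1 / Real.pi := by positivity
  refine mul_le_mul_of_nonneg_left ?_ h1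
  exact setIntegral_mono_set (integrableOn_dens hg ht)
    (Filter.Eventually.of_forall (fun z => dens_nonneg g z)) (HasSubset.Subset.eventuallyLE hst)

/-! ### Change of variables under `exp` -/

lemma det_aux (c : ℂ) : |(((1 : ℂ →L[ℂ] ℂ).smulRight c).restrictScalars ℝ).det| = ‖c‖ ^ 2 := by
  have h1 : (((1 : ℂ →L[ℂ] ℂ).smulRight c).restrictScalars ℝ).det
      = LinearMap.det ((Algebra.lmul ℝ ℂ) c) := by
    apply congrArg LinearMap.det
    ext w
    simp [mul_comm]
  rw [h1, ← Algebra.norm_apply, Algebra.norm_complex_apply, Complex.normSq_eq_norm_sq]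
  rw [abs_of_nonneg (by positivity)]

lemma sphArea_comp_exp_aux {g : ℂ → ℂ} (hg : Differentiable ℂ g) {Q : Set ℂ}
    (hQ : MeasurableSet Q) (hinj : Set.InjOn Complex.exp Q) :
    ∫ z in Complex.exp '' Q, dens g z = ∫ z in Q, dens (g ∘ Complex.exp) z := by
  rw [integral_image_eq_integral_abs_det_fderiv_smul (μ := volume) hQ
      (f' := fun z => ((1 : ℂ →L[ℂ] ℂ).smulRight (Complex.exp z)).restrictScalars ℝ)
      (fun z _ => ((Complex.hasDerivAt_exp z).hasFDerivAt.restrictScalars ℝ).hasFDerivWithinAt)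
      hinj (fun w => dens g w)]
  congr 1
  funext z
  have hd : deriv (g ∘ Complex.exp) z = deriv g (Complex.exp z) * Complex.exp z := by
    rw [deriv_comp z (hg.differentiableAt) (Complex.differentiable_exp.differentiableAt),
      Complex.deriv_exp]
  unfold dens
  rw [det_aux, hd, Function.comp_apply, smul_eq_mul, norm_mul, mul_pow]
  ring

lemma sphArea_comp_exp {g : ℂ → ℂ} (hg : Differentiable ℂ g) {Q : Set ℂ}
    (hQ : MeasurableSet Q) (hinj : Set.InjOn Complex.exp Q) :
    sphArea (g ∘ Complex.exp) Q = sphArea g (Complex.exp '' Q) := by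
  rw [sphArea_eq, sphArea_eq, sphArea_comp_exp_aux hg hQ hinj]

/-! ### Rectangles -/

def rect (a b c d : ℝ) : Set ℂ := {z : ℂ | z.re ∈ Ioo a b ∧ z.im ∈ Ioo c d}

lemma measurableSet_rect (a b c d : ℝ) : MeasurableSet (rect a b c d) := by
  have : rect a b c d = Complex.re ⁻¹' (Ioo a b) ∩ Complex.im ⁻¹' (Ioo c d) := rfl
  rw [this]
  exact (Complex.measurable_re measurableSet_Ioo).inter (Complex.measurable_im measurableSet_Ioo)

lemma rect_subset_closedBall (a b c d : ℝ) :
    rect a b c d ⊆ Metric.closedBall 0 (max |a| |b| + max |c| |d|) := by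
  intro z hz
  obtain ⟨⟨h1, h2⟩, h3, h4⟩ := hz
  rw [Metric.mem_closedBall, dist_zero_right]
  calc ‖z‖ ≤ |z.re| + |z.im| := Complex.norm_le_abs_re_add_abs_im z
    _ ≤ max |a| |b| + max |c| |d| := by
        gcongr
        · exact abs_le_max_abs_abs h1.le h2.le
        · exact abs_le_max_abs_abs h3.le h4.le

lemma volume_rect (a b c d : ℝ) :
    volume (rect a b c d) = ENNReal.ofReal (b - a) * ENNReal.ofReal (d - c) := by
  have h : rect a b c d = Complex.measurableEquivRealProd ⁻¹' (Ioo a b ×ˢ Ioo c d) := by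
    ext z; simp [rect, Complex.measurableEquivRealProd, Complex.equivRealProdCLM]
    rfl
  rw [h, Complex.volume_preserving_equiv_real_prod.measure_preimage
    ((measurableSet_Ioo.prod measurableSet_Ioo).nullMeasurableSet)]
  rw [show (volume : Measure (ℝ × ℝ)) = (volume : Measure ℝ).prod volume from rfl]
  rw [Measure.prod_prod, Real.volume_Ioo, Real.volume_Ioo]

lemma injOn_exp_rect {a b c d : ℝ} (h : d - c ≤ 2 * π) :
    Set.InjOn Complex.exp (rect a b c d) := by
  intro z hz w hw he
  obtain ⟨n, hn⟩ := Complex.exp_eq_exp_iff_exists_int.mp he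
  have him : z.im = w.im + (n : ℝ) * (2 * π) := by
    have := congrArg Complex.im hn
    simpa [Complex.add_im, Complex.mul_im, Complex.I_re, Complex.I_im] using this
  have h1 : c < z.im ∧ z.im < d := hz.2
  have h2 : c < w.im ∧ w.im < d := hw.2
  have hn0 : n = 0 := by
    by_contra hne
    have h1n : (1:ℝ) ≤ |(n:ℝ)| := by
      exact_mod_cast Int.one_le_abs (by exact_mod_cast hne : n ≠ 0)
    have hlt : |z.im - w.im| < 2 * π := by
      rw [abs_lt]; constructor <;> nlinarith [h1.1, h1.2, h2.1, h2.2]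
    rw [him] at hlt
    have habs : |(n:ℝ)| * (2 * π) < 2 * π := by
      simpa [abs_mul, abs_of_pos Real.two_pi_pos] using hlt
    nlinarith [Real.two_pi_pos]
  rw [hn0] at hn; simpa using hn

lemma image_exp_rect_bdd (a b c d : ℝ) :
    Complex.exp '' rect a b c d ⊆ Metric.closedBall 0 (Real.exp b) := by
  rintro w ⟨z, hz, rfl⟩
  rw [Metric.mem_closedBall, dist_zero_right, Complex.norm_exp]
  exact Real.exp_le_exp.mpr hz.1.2.le

/-! ### Pointwise surjectivity facts for `exp` -/

lemma exp_mk (t θ : ℝ) : Complex.exp ((t : ℂ) + (θ : ℂ) * Complex.I)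
    = ((Real.exp t * Real.cos θ : ℝ) : ℂ) + ((Real.exp t * Real.sin θ : ℝ) : ℂ) * Complex.I := by
  apply Complex.ext
  · rw [Complex.exp_re]
    simp [Complex.exp_ofReal_re, Complex.cos_ofReal_re]
  · rw [Complex.exp_im]
    simp [Complex.exp_ofReal_re, Complex.sin_ofReal_re]

lemma exp_half_log {s : ℝ} (hs : 0 < s) : Real.exp (Real.log s / 2) = Real.sqrt s := by
  rw [Real.sqrt_eq_rpow, Real.rpow_def_of_pos hs]
  ring_nf

lemma exp_surj_A {u v : ℝ} (hu : 0 < u) :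
    Complex.exp (((Real.log (u ^ 2 + v ^ 2) / 2 : ℝ) : ℂ)
        + ((Real.arctan (v / u) : ℝ) : ℂ) * Complex.I)
      = (u : ℂ) + (v : ℂ) * Complex.I := by
  have hs : 0 < u ^ 2 + v ^ 2 := by positivity
  rw [exp_mk, exp_half_log hs]
  have hsq : Real.sqrt (1 + (v / u) ^ 2) = Real.sqrt (u ^ 2 + v ^ 2) / u := by
    rw [show 1 + (v / u) ^ 2 = (u ^ 2 + v ^ 2) / u ^ 2 by field_simp]
    rw [Real.sqrt_div hs.le, Real.sqrt_sq hu.le]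
  have hs0 : (0:ℝ) < Real.sqrt (u ^ 2 + v ^ 2) := Real.sqrt_pos.mpr hs
  have h1 : Real.sqrt (u ^ 2 + v ^ 2) * Real.cos (Real.arctan (v / u)) = u := by
    rw [Real.cos_arctan, hsq]
    field_simp
  have h2 : Real.sqrt (u ^ 2 + v ^ 2) * Real.sin (Real.arctan (v / u)) = v := by
    rw [Real.sin_arctan, hsq]
    field_simp
  rw [h1, h2]

lemma exp_surj_B {u v : ℝ} (hv : 0 < v) :
    Complex.exp (((Real.log (u ^ 2 + v ^ 2) / 2 : ℝ) : ℂ)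
        + ((π / 2 - Real.arctan (u / v) : ℝ) : ℂ) * Complex.I)
      = (u : ℂ) + (v : ℂ) * Complex.I := by
  have hs : 0 < u ^ 2 + v ^ 2 := by positivity
  rw [exp_mk, exp_half_log hs, Real.cos_pi_div_two_sub, Real.sin_pi_div_two_sub]
  have hsq : Real.sqrt (1 + (u / v) ^ 2) = Real.sqrt (u ^ 2 + v ^ 2) / v := by
    rw [show 1 + (u / v) ^ 2 = (u ^ 2 + v ^ 2) / v ^ 2 by field_simp; ring]
    rw [Real.sqrt_div hs.le, Real.sqrt_sq hv.le]
  have hs0 : (0:ℝ) < Real.sqrt (u ^ 2 + v ^ 2) := Real.sqrt_pos.mpr hs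
  have h1 : Real.sqrt (u ^ 2 + v ^ 2) * Real.sin (Real.arctan (u / v)) = u := by
    rw [Real.sin_arctan, hsq]
    field_simp
  have h2 : Real.sqrt (u ^ 2 + v ^ 2) * Real.cos (Real.arctan (u / v)) = v := by
    rw [Real.cos_arctan, hsq]
    field_simp
  rw [h1, h2]

lemma re_mk (t θ : ℝ) : ((t : ℂ) + (θ : ℂ) * Complex.I).re = t := by simp

lemma im_mk (t θ : ℝ) : ((t : ℂ) + (θ : ℂ) * Complex.I).im = θ := by simp

lemma arctan_le_self' {s : ℝ} (hs : 0 ≤ s) : Real.arctan s ≤ s := by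
  rcases eq_or_lt_of_le hs with h | h
  · simp [← h]
  · have hy : 0 < Real.arctan s := by
      have := Real.arctan_strictMono h
      rwa [Real.arctan_zero] at this
    have hy2 : Real.arctan s < π / 2 := Real.arctan_lt_pi_div_two s
    have h3 := Real.lt_tan hy hy2
    rw [Real.tan_arctan] at h3
    exact h3.le

lemma abs_arctan_le (s : ℝ) : |Real.arctan s| ≤ |s| := by
  rcases le_or_gt 0 s with h | h
  · rw [abs_of_nonneg, abs_of_nonneg h]
    · exact arctan_le_self' h
    · rcases eq_or_lt_of_le h with h' | h'
      · simp [← h']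
      · have h2 := Real.arctan_strictMono h'
        rw [Real.arctan_zero] at h2
        exact h2.le
  · have h1 : Real.arctan s < 0 := by
      have := Real.arctan_strictMono h
      rwa [Real.arctan_zero] at this
    rw [abs_of_neg h1, abs_of_neg h, ← Real.arctan_neg]
    exact arctan_le_self' (by linarith)

/-! ### The geometric step -/

lemma step_subset {a b h : ℝ} (h0 : 0 < h) (hw : h ≤ b - a) (hπ : h ≤ π) :
    rect (Real.exp a) (Real.exp b - min (Real.exp a * h / 2) π)
      (-(min (Real.exp a * h / 2) π)) (min (Real.exp a * h / 2) π)
      ⊆ Complex.exp '' rect a b (-h) h := by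
  set H := min (Real.exp a * h / 2) π with hHdef
  have hH1 : H ≤ Real.exp a * h / 2 := min_le_left _ _
  have hH0 : 0 < H := lt_min (by positivity) Real.pi_pos
  have hHb : H < Real.exp b := by
    have h1 : Real.exp b = Real.exp a * Real.exp (b - a) := by
      rw [← Real.exp_add]; ring_nf
    have h2 : (b - a) / 2 < Real.exp (b - a) := by
      nlinarith [Real.add_one_le_exp (b - a)]
    have h3 : Real.exp a * h / 2 ≤ Real.exp a * ((b - a) / 2) := by
      have := Real.exp_pos a
      nlinarith
    calc H ≤ Real.exp a * h / 2 := hH1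
      _ ≤ Real.exp a * ((b - a) / 2) := h3
      _ < Real.exp a * Real.exp (b - a) := by
          have := Real.exp_pos a
          exact mul_lt_mul_of_pos_left h2 this
      _ = Real.exp b := h1.symm
  intro w hw'
  obtain ⟨⟨hu1, hu2⟩, hv1, hv2⟩ := hw'
  set u := w.re with hu
  set v := w.im with hv
  have hu0 : 0 < u := lt_trans (Real.exp_pos a) hu1
  have hvabs : |v| < H := abs_lt.mpr ⟨hv1, hv2⟩
  refine ⟨((Real.log (u ^ 2 + v ^ 2) / 2 : ℝ) : ℂ)
      + ((Real.arctan (v / u) : ℝ) : ℂ) * Complex.I, ?_, ?_⟩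
  · have hre := re_mk (Real.log (u ^ 2 + v ^ 2) / 2) (Real.arctan (v / u))
    have him := im_mk (Real.log (u ^ 2 + v ^ 2) / 2) (Real.arctan (v / u))
    constructor
    · rw [hre]
      have hs : (0:ℝ) < u ^ 2 + v ^ 2 := by positivity
      constructor
      · have h1 : Real.exp (2 * a) < u ^ 2 + v ^ 2 := by
          have h2 : Real.exp (2 * a) = Real.exp a * Real.exp a := by
            rw [← Real.exp_add]; ring_nf
          nlinarith [sq_nonneg v, Real.exp_pos a]
        have := (Real.lt_log_iff_exp_lt hs).mpr h1
        linarith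
      · have h1 : u ^ 2 + v ^ 2 < Real.exp (2 * b) := by
          have h2 : Real.exp (2 * b) = Real.exp b * Real.exp b := by
            rw [← Real.exp_add]; ring_nf
          have hub : u < Real.exp b - H := hu2
          have hv2' : v ^ 2 < H ^ 2 := by nlinarith [abs_nonneg v, sq_abs v]
          have hu2' : u ^ 2 < (Real.exp b - H) ^ 2 := by nlinarith
          nlinarith
        have := (Real.log_lt_iff_lt_exp hs).mpr h1
        linarith
    · rw [him]
      have harc : |Real.arctan (v / u)| < h := by
        have h1 : |Real.arctan (v / u)| ≤ |v / u| := abs_arctan_le _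
        have h2 : |v / u| = |v| / u := by rw [abs_div, abs_of_pos hu0]
        have h3 : |v| / u < h / 2 := by
          have hea : Real.exp a < u := hu1
          have : |v| < Real.exp a * h / 2 := lt_of_lt_of_le hvabs hH1
          rw [div_lt_iff₀ hu0]
          nlinarith [abs_nonneg v, Real.exp_pos a]
        have := lt_of_le_of_lt (h1.trans_eq h2) h3
        linarith
      exact abs_lt.mp harc
  · rw [exp_surj_A hu0]
    exact Complex.re_add_im w

/-! ### Strips in the image of a full-height rectangle -/

lemma pi_facts : (3:ℝ) < π ∧ π < 3.15 := ⟨Real.pi_gt_three, Real.pi_lt_d2⟩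

lemma strip_subset {α β : ℝ} (hα : 4 ≤ α) (hβ : α + 3 ≤ β) {j : ℕ}
    (hj0 : Real.exp α ≤ 2 * π * j) (hj1 : 2 * π * (j + 1) ≤ Real.exp β / 2) :
    rect (-1) 1 (2 * π * j) (2 * π * (j + 1)) ⊆ Complex.exp '' rect α β (-π) π := by
  intro w hw'
  obtain ⟨⟨hu1, hu2⟩, hv1, hv2⟩ := hw'
  set u := w.re with hu
  set v := w.im with hv
  have hv0 : 0 < v := lt_of_lt_of_le (lt_of_lt_of_le (Real.exp_pos α) hj0) hv1.le
  refine ⟨((Real.log (u ^ 2 + v ^ 2) / 2 : ℝ) : ℂ)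
      + ((π / 2 - Real.arctan (u / v) : ℝ) : ℂ) * Complex.I, ?_, ?_⟩
  · have hre := re_mk (Real.log (u ^ 2 + v ^ 2) / 2) (π / 2 - Real.arctan (u / v))
    have him := im_mk (Real.log (u ^ 2 + v ^ 2) / 2) (π / 2 - Real.arctan (u / v))
    have hs : (0:ℝ) < u ^ 2 + v ^ 2 := by positivity
    constructor
    · rw [hre]
      constructor
      · have h1 : Real.exp (2 * α) < u ^ 2 + v ^ 2 := by
          have h2 : Real.exp (2 * α) = Real.exp α * Real.exp α := by
            rw [← Real.exp_add]; ring_nf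
          have h3 : Real.exp α < v := lt_of_le_of_lt hj0 hv1
          nlinarith [sq_nonneg u, Real.exp_pos α]
        have := (Real.lt_log_iff_exp_lt hs).mpr h1
        linarith
      · have h1 : u ^ 2 + v ^ 2 < Real.exp (2 * β) := by
          have h2 : Real.exp (2 * β) = Real.exp β * Real.exp β := by
            rw [← Real.exp_add]; ring_nf
          have h3 : v < Real.exp β / 2 := lt_of_lt_of_le hv2 hj1
          have h4 : u ^ 2 < 1 := by nlinarith
          have h5 : (15:ℝ) ≤ Real.exp (2 * β) := by
            nlinarith [Real.add_one_le_exp (2 * β)]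
          nlinarith
        have := (Real.log_lt_iff_lt_exp hs).mpr h1
        linarith
    · rw [him]
      have ha1 := Real.arctan_lt_pi_div_two (u / v)
      have ha2 := Real.neg_pi_div_two_lt_arctan (u / v)
      constructor <;> [skip; skip] <;> nlinarith [Real.pi_pos]
  · rw [exp_surj_B hv0]
    exact Complex.re_add_im w

/-! ### Lower bound for the density of `exp` on a strip -/

lemma dens_exp_lb {z : ℂ} (h1 : -1 < z.re) (h2 : z.re < 1) :
    (1:ℝ)/1000 ≤ dens Complex.exp z := by
  unfold dens
  rw [Complex.deriv_exp]
  have hn : ‖Complex.exp z‖ = Real.exp z.re := by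
    rw [Complex.norm_exp]
  rw [hn]
  have he3 : Real.exp 1 ≤ 3 := by
    have := Real.exp_one_lt_d9
    linarith
  have ht2 : Real.exp z.re ≤ 3 := le_trans (Real.exp_le_exp.mpr h2.le) he3
  have ht1 : (1:ℝ)/3 ≤ Real.exp z.re := by
    have h4 : Real.exp (-1) ≤ Real.exp z.re := Real.exp_le_exp.mpr h1.le
    have h5 : Real.exp (-1) = (Real.exp 1)⁻¹ := by rw [Real.exp_neg]
    have h6 : (1:ℝ)/3 ≤ (Real.exp 1)⁻¹ := by
      rw [one_div]
      exact inv_anti₀ (Real.exp_pos 1) he3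
    linarith
  set t := Real.exp z.re
  have ht0 : 0 < t := Real.exp_pos z.re
  have h7 : t ^ 2 ≤ 9 := by nlinarith
  have hd : (1 + t ^ 2) ^ 2 ≤ 100 := by nlinarith
  have hn2 : (1:ℝ)/9 ≤ t ^ 2 := by nlinarith
  calc (1:ℝ)/1000 ≤ (1/9)/100 := by norm_num
    _ ≤ t ^ 2 / (1 + t ^ 2) ^ 2 := by
        exact div_le_div₀ (by positivity) hn2 (by positivity) hd

lemma sphArea_strip (c : ℝ) :
    (1:ℝ)/250 ≤ sphArea Complex.exp (rect (-1) 1 c (c + 2 * π)) := by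
  rw [sphArea_eq]
  have hvol : volume (rect (-1) 1 c (c + 2 * π))
      = ENNReal.ofReal 2 * ENNReal.ofReal (2 * π) := by
    rw [volume_rect]
    norm_num
  have hne : volume (rect (-1) 1 c (c + 2 * π)) ≠ ⊤ := by
    rw [hvol]
    exact ENNReal.mul_ne_top ENNReal.ofReal_ne_top ENNReal.ofReal_ne_top
  have key := setIntegral_ge_of_const_le (μ := volume) (c := (1:ℝ)/1000)
    (measurableSet_rect (-1) 1 c (c + 2 * π)) hne
    (fun z hz => dens_exp_lb hz.1.1 hz.1.2)
    (integrableOn_dens Complex.contDiff_exp (rect_subset_closedBall (-1) 1 c (c + 2 * π)))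
  have htr : (volume (rect (-1) 1 c (c + 2 * π))).toReal = 4 * π := by
    rw [hvol, ENNReal.toReal_mul, ENNReal.toReal_ofReal (by norm_num),
      ENNReal.toReal_ofReal (by positivity)]
    ring
  rw [measureReal_def, htr, smul_eq_mul, mul_comm (4 * π)] at key
  have hπ : (0:ℝ) < π := Real.pi_pos
  have : (1:ℝ)/250 = (1/π) * (1/1000 * (4 * π)) := by field_simp; ring
  rw [this]
  apply mul_le_mul_of_nonneg_left key (by positivity)

/-! ### Iterates of exp -/

lemma contDiff_iter (m : ℕ) : ContDiff ℂ ⊤ (Complex.exp^[m]) := by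
  induction m with
  | zero => simpa using contDiff_id
  | succ k ih =>
      rw [Function.iterate_succ]
      exact ih.comp Complex.contDiff_exp

lemma chain_step (m : ℕ) {a b h : ℝ} (h0 : 0 < h) (hw : h ≤ b - a) (hπ : h ≤ π) :
    sphArea (Complex.exp^[m])
      (rect (Real.exp a) (Real.exp b - min (Real.exp a * h / 2) π)
        (-(min (Real.exp a * h / 2) π)) (min (Real.exp a * h / 2) π))
      ≤ sphArea (Complex.exp^[m + 1]) (rect a b (-h) h) := by
  have hiter : Complex.exp^[m + 1] = Complex.exp^[m] ∘ Complex.exp :=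
    Function.iterate_succ _ _
  rw [hiter, sphArea_comp_exp ((contDiff_iter m).differentiable (by simp))
    (measurableSet_rect a b (-h) h) (injOn_exp_rect (by linarith : h - (-h) ≤ 2 * π))]
  exact sphArea_mono (contDiff_iter m) (step_subset h0 hw hπ) (image_exp_rect_bdd a b (-h) h)

/-! ### The rectangle sequence -/

noncomputable def st (x r : ℝ) : ℕ → ℝ × ℝ × ℝ
  | 0 => (x - r / 2, x + r / 2, min (r / 2) π)
  | n + 1 =>
      let p := st x r n
      (Real.exp p.1, Real.exp p.2.1 - min (Real.exp p.1 * p.2.2 / 2) π,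
        min (Real.exp p.1 * p.2.2 / 2) π)

noncomputable def aa (x r : ℝ) (n : ℕ) : ℝ := (st x r n).1
noncomputable def bb (x r : ℝ) (n : ℕ) : ℝ := (st x r n).2.1
noncomputable def hh (x r : ℝ) (n : ℕ) : ℝ := (st x r n).2.2

variable {x r : ℝ}

lemma aa_zero : aa x r 0 = x - r / 2 := rfl
lemma bb_zero : bb x r 0 = x + r / 2 := rfl
lemma hh_zero : hh x r 0 = min (r / 2) π := rfl
lemma aa_succ (n : ℕ) : aa x r (n + 1) = Real.exp (aa x r n) := rfl
lemma bb_succ (n : ℕ) :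
    bb x r (n + 1) = Real.exp (bb x r n) - min (Real.exp (aa x r n) * hh x r n / 2) π := rfl
lemma hh_succ (n : ℕ) : hh x r (n + 1) = min (Real.exp (aa x r n) * hh x r n / 2) π := rfl

lemma invariants (x : ℝ) {r : ℝ} (hr : 0 < r) :
    ∀ n, 0 < hh x r n ∧ hh x r n ≤ π ∧ hh x r n ≤ bb x r n - aa x r n := by
  intro n
  induction n with
  | zero =>
      refine ⟨lt_min (by linarith) Real.pi_pos, min_le_right _ _, ?_⟩
      rw [aa_zero, bb_zero, hh_zero]
      have : min (r / 2) π ≤ r / 2 := min_le_left _ _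
      linarith
  | succ k ih =>
      obtain ⟨h0, hπ, hw⟩ := ih
      set a := aa x r k
      set b := bb x r k
      set h := hh x r k
      refine ⟨lt_min (by positivity) Real.pi_pos, by rw [hh_succ]; exact min_le_right _ _, ?_⟩
      rw [hh_succ, aa_succ, bb_succ]
      have hmin : min (Real.exp a * h / 2) π ≤ Real.exp a * h / 2 := min_le_left _ _
      have hexp : Real.exp a * (1 + (b - a)) ≤ Real.exp b := by
        have h1 : Real.exp b = Real.exp a * Real.exp (b - a) := by
          rw [← Real.exp_add]; ring_nf
        have h2 := Real.add_one_le_exp (b - a)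
        have := Real.exp_pos a
        nlinarith
      have := Real.exp_pos a
      nlinarith

lemma aa_lb : ∀ n : ℕ, x - r / 2 + n ≤ aa x r n := by
  intro n
  induction n with
  | zero => simp [aa_zero]
  | succ k ih =>
      rw [aa_succ]
      have := Real.add_one_le_exp (aa x r k)
      push_cast
      linarith

lemma two_mul_le_exp {t : ℝ} (ht : 0 ≤ t) : 2 * t ≤ Real.exp t := by
  have h1 := Real.add_one_le_exp (t / 2)
  have h2 : Real.exp t = Real.exp (t / 2) ^ 2 := by
    rw [sq, ← Real.exp_add]; ring_nf
  nlinarith [sq_nonneg (t / 2 - 1)]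

/-! ### Saturation -/

lemma saturation (hr : 0 < r) :
    ∃ K : ℕ, ∀ k, K ≤ k → hh x r k = π ∧ 4 ≤ aa x r k := by
  set K1 : ℕ := ⌈(4:ℝ) - (x - r / 2)⌉₊ with hK1
  have haK1 : ∀ k, K1 ≤ k → 4 ≤ aa x r k := by
    intro k hk
    have h1 := aa_lb (x := x) (r := r) k
    have h2 : (4:ℝ) - (x - r / 2) ≤ K1 := Nat.le_ceil _
    have h3 : (K1:ℝ) ≤ k := Nat.cast_le.mpr hk
    linarith
  have hgrow : ∀ j : ℕ, min ((2:ℝ) ^ j * hh x r K1) π ≤ hh x r (K1 + j) := by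
    intro j
    induction j with
    | zero =>
        simp only [pow_zero, one_mul, Nat.add_zero]
        rw [min_eq_left (invariants x hr K1).2.1]
    | succ i ih =>
        have h4 : 4 ≤ aa x r (K1 + i) := haK1 _ (Nat.le_add_right _ _)
        have hexp4 : (4:ℝ) ≤ Real.exp (aa x r (K1 + i)) := by
          have := Real.add_one_le_exp (aa x r (K1 + i))
          linarith
        have hpos := (invariants x hr (K1 + i)).1
        have step : hh x r (K1 + (i + 1)) = min (Real.exp (aa x r (K1 + i)) * hh x r (K1 + i) / 2) π := by
          rw [show K1 + (i + 1) = (K1 + i) + 1 from rfl, hh_succ]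
        rw [step]
        have h5 : 2 * hh x r (K1 + i) ≤ Real.exp (aa x r (K1 + i)) * hh x r (K1 + i) / 2 := by
          nlinarith
        have h6 : min (2 * hh x r (K1 + i)) π ≤ min (Real.exp (aa x r (K1 + i)) * hh x r (K1 + i) / 2) π :=
          min_le_min h5 le_rfl
        refine le_trans ?_ h6
        have h7 : min ((2:ℝ) ^ (i + 1) * hh x r K1) π ≤ min (2 * min ((2:ℝ) ^ i * hh x r K1) π) π := by
          rcases le_total ((2:ℝ) ^ i * hh x r K1) π with hc | hc
          · rw [min_eq_left hc, pow_succ]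
            apply min_le_min ?_ le_rfl
            ring_nf
            exact le_rfl
          · rw [min_eq_right hc]
            have hπ := Real.pi_pos
            rw [min_eq_right (by linarith : π ≤ 2 * π)]
            exact min_le_right _ _
        refine le_trans h7 ?_
        have h8 : 2 * min ((2:ℝ) ^ i * hh x r K1) π ≤ 2 * hh x r (K1 + i) := by linarith [ih]
        exact min_le_min h8 le_rfl
  have hh1pos : 0 < hh x r K1 := (invariants x hr K1).1
  obtain ⟨j0, hj0⟩ := pow_unbounded_of_one_lt (π / hh x r K1) (by norm_num : (1:ℝ) < 2)
  have hsat : hh x r (K1 + j0) = π := by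
    have h1 : π ≤ (2:ℝ) ^ j0 * hh x r K1 := by
      rw [div_lt_iff₀ hh1pos] at hj0
      linarith
    have h2 := hgrow j0
    rw [min_eq_right h1] at h2
    exact le_antisymm (invariants x hr (K1 + j0)).2.1 h2
  refine ⟨K1 + j0, ?_⟩
  have hpers : ∀ d : ℕ, hh x r (K1 + j0 + d) = π := by
    intro d
    induction d with
    | zero => exact hsat
    | succ i ih =>
        have h4 : 4 ≤ aa x r (K1 + j0 + i) := haK1 _ (by omega)
        have hexp4 : (4:ℝ) ≤ Real.exp (aa x r (K1 + j0 + i)) := by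
          have := Real.add_one_le_exp (aa x r (K1 + j0 + i))
          linarith
        rw [show K1 + j0 + (i + 1) = (K1 + j0 + i) + 1 from rfl, hh_succ, ih]
        rw [min_eq_right]
        nlinarith [Real.pi_pos]
    
  intro k hk
  obtain ⟨d, rfl⟩ := Nat.exists_eq_add_of_le hk
  exact ⟨hpers d, haK1 _ (by omega)⟩

/-! ### The final strip count -/

lemma exp_pow_facts : (20:ℝ) ≤ Real.exp 3 ∧ (54:ℝ) ≤ Real.exp 4 ∧ (2000:ℝ) ≤ Real.exp 8 := by
  have he := Real.exp_one_gt_d9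
  have h3 : Real.exp 1 ^ 3 = Real.exp 3 := by
    rw [Real.exp_one_pow]; norm_num
  have h4 : Real.exp 1 ^ 4 = Real.exp 4 := by
    rw [Real.exp_one_pow]; norm_num
  have hp3 : (2.7182818283:ℝ) ^ 3 ≤ Real.exp 1 ^ 3 := pow_le_pow_left₀ (by norm_num) he.le 3
  have hc3 : (20:ℝ) ≤ (2.7182818283:ℝ) ^ 3 := by norm_num
  have h20 : (20:ℝ) ≤ Real.exp 3 := by rw [← h3]; linarith
  have hp4 : (2.7182818283:ℝ) ^ 4 ≤ Real.exp 1 ^ 4 := pow_le_pow_left₀ (by norm_num) he.le 4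
  have hc4 : (54:ℝ) ≤ (2.7182818283:ℝ) ^ 4 := by norm_num
  have h54 : (54:ℝ) ≤ Real.exp 4 := by rw [← h4]; linarith
  refine ⟨h20, h54, ?_⟩
  have h8 : Real.exp 8 = Real.exp 4 * Real.exp 4 := by
    rw [← Real.exp_add]; norm_num
  nlinarith

lemma sum_strips {α β : ℝ} (hα : 4 ≤ α) (hβ : α + 3 ≤ β) :
    Real.exp (α - 8) ≤ sphArea (Complex.exp^[2]) (rect α β (-π) π) := by
  have hπ := Real.pi_pos
  have h3π : (3:ℝ) < π := Real.pi_gt_three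
  have hπ4 : π ≤ 4 := Real.pi_le_four
  have h2 : Complex.exp^[2] = Complex.exp ∘ Complex.exp := by
    rw [show (2:ℕ) = 1 + 1 from rfl, Function.iterate_succ, Function.iterate_one]
  rw [h2, sphArea_comp_exp Complex.differentiable_exp (measurableSet_rect _ _ _ _)
    (injOn_exp_rect (by linarith : π - (-π) ≤ 2 * π))]
  set j0 := ⌈Real.exp α⌉₊ with hj0def
  set j1 := ⌊Real.exp β / (4 * π)⌋₊ with hj1def
  set T : ℕ → Set ℂ := fun j => rect (-1) 1 (2 * π * j) (2 * π * (j + 1)) with hT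
  have hsub : ∀ j ∈ Finset.Ico j0 j1, T j ⊆ Complex.exp '' rect α β (-π) π := by
    intro j hj
    obtain ⟨hja, hjb⟩ := Finset.mem_Ico.mp hj
    apply strip_subset hα hβ
    · have h1 : Real.exp α ≤ j0 := Nat.le_ceil _
      have hjc : (j0:ℝ) ≤ j := Nat.cast_le.mpr hja
      nlinarith [(Nat.cast_nonneg j : (0:ℝ) ≤ (j:ℝ))]
    · have h1 : (j:ℝ) + 1 ≤ j1 := by exact_mod_cast hjb
      have hjc : (j1:ℝ) ≤ Real.exp β / (4 * π) := Nat.floor_le (by positivity)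
      calc 2 * π * ((j:ℝ) + 1) ≤ 2 * π * (Real.exp β / (4 * π)) := by nlinarith
        _ = Real.exp β / 2 := by field_simp; ring
  have hUsub : (⋃ j ∈ Finset.Ico j0 j1, T j) ⊆ Complex.exp '' rect α β (-π) π :=
    Set.iUnion₂_subset hsub
  have hmono : sphArea Complex.exp (⋃ j ∈ Finset.Ico j0 j1, T j)
      ≤ sphArea Complex.exp (Complex.exp '' rect α β (-π) π) :=
    sphArea_mono Complex.contDiff_exp hUsub (image_exp_rect_bdd α β (-π) π)
  have hdlt : ∀ i j : ℕ, i < j → Disjoint (T i) (T j) := by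
    intro i j hij
    rw [Set.disjoint_left]
    rintro z ⟨_, _, hz2⟩ ⟨_, hw1, _⟩
    have hij' : (i:ℝ) + 1 ≤ j := by exact_mod_cast hij
    nlinarith
  have hdisj : (↑(Finset.Ico j0 j1) : Set ℕ).Pairwise (Function.onFun Disjoint T) := by
    intro i _ j _ hij
    rcases Nat.lt_or_ge i j with h | h
    · exact hdlt i j h
    · exact (hdlt j i (by omega)).symm
  have hint : ∀ j ∈ Finset.Ico j0 j1, IntegrableOn (dens Complex.exp) (T j) :=
    fun j _ => integrableOn_dens Complex.contDiff_exp (rect_subset_closedBall _ _ _ _)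
  have hadd : ∫ z in (⋃ j ∈ Finset.Ico j0 j1, T j), dens Complex.exp z
      = ∑ j ∈ Finset.Ico j0 j1, ∫ z in T j, dens Complex.exp z :=
    integral_biUnion_finset _ (fun j _ => measurableSet_rect _ _ _ _) hdisj hint
  have hsplit : sphArea Complex.exp (⋃ j ∈ Finset.Ico j0 j1, T j)
      = ∑ j ∈ Finset.Ico j0 j1, sphArea Complex.exp (T j) := by
    rw [sphArea_eq, hadd, Finset.mul_sum]
    rfl
  have hper : ∀ j ∈ Finset.Ico j0 j1, (1:ℝ)/250 ≤ sphArea Complex.exp (T j) := by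
    intro j _
    have := sphArea_strip (2 * π * j)
    have heq : (2 * π * (j:ℝ)) + 2 * π = 2 * π * ((j:ℝ) + 1) := by ring
    rw [heq] at this
    exact this
  have hsum : ((j1 - j0 : ℕ) : ℝ) * (1/250)
      ≤ ∑ j ∈ Finset.Ico j0 j1, sphArea Complex.exp (T j) := by
    have := Finset.card_nsmul_le_sum (Finset.Ico j0 j1) (fun j => sphArea Complex.exp (T j))
      ((1:ℝ)/250) (fun j hj => hper j hj)
    rw [Nat.card_Ico] at this
    simpa [nsmul_eq_mul] using this
  obtain ⟨he3, he4, he8⟩ := exp_pow_facts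
  have heα : (54:ℝ) ≤ Real.exp α := le_trans he4 (Real.exp_le_exp.mpr hα)
  have hcount : Real.exp α / 8 ≤ ((j1 - j0 : ℕ) : ℝ) := by
    have h1 : Real.exp β / (4 * π) - 1 < (j1:ℝ) := Nat.sub_one_lt_floor _
    have hj0' : (j0:ℝ) < Real.exp α + 1 := Nat.ceil_lt_add_one (by positivity)
    have hb : Real.exp α * Real.exp 3 ≤ Real.exp β := by
      rw [← Real.exp_add]
      exact Real.exp_le_exp.mpr (by linarith)
    have h20β : 20 * Real.exp α ≤ Real.exp β := by
      nlinarith [Real.exp_pos α]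
    have hD : (20:ℝ) * Real.exp α / 16 ≤ Real.exp β / (4 * π) := by
      have h4π : (0:ℝ) < 4 * π := by positivity
      rw [div_le_div_iff₀ (by norm_num) h4π]
      nlinarith [Real.exp_pos α, Real.exp_pos β]
    have hle : j0 ≤ j1 := by
      by_contra hc
      push_neg at hc
      have hcast : (j1:ℝ) < j0 := Nat.cast_lt.mpr hc
      linarith
    rw [Nat.cast_sub hle]
    linarith
  calc Real.exp (α - 8) = Real.exp α / Real.exp 8 := Real.exp_sub α 8
    _ ≤ Real.exp α / 2000 := by
        apply div_le_div_of_nonneg_left (Real.exp_pos α).le (by norm_num) he8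
    _ = (Real.exp α / 8) * (1/250) := by ring
    _ ≤ ((j1 - j0 : ℕ) : ℝ) * (1/250) := by nlinarith
    _ ≤ ∑ j ∈ Finset.Ico j0 j1, sphArea Complex.exp (T j) := hsum
    _ = sphArea Complex.exp (⋃ j ∈ Finset.Ico j0 j1, T j) := hsplit.symm
    _ ≤ sphArea Complex.exp (Complex.exp '' rect α β (-π) π) := hmono

/-! ### Chaining the steps -/

lemma chain (x : ℝ) {r : ℝ} (hr : 0 < r) : ∀ k m : ℕ,
    sphArea (Complex.exp^[m]) (rect (aa x r k) (bb x r k) (-(hh x r k)) (hh x r k))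
      ≤ sphArea (Complex.exp^[m + k])
          (rect (aa x r 0) (bb x r 0) (-(hh x r 0)) (hh x r 0)) := by
  intro k
  induction k with
  | zero =>
      intro m
      rw [Nat.add_zero]
  | succ i ih =>
      intro m
      have hinv := invariants x hr i
      calc sphArea (Complex.exp^[m])
            (rect (aa x r (i+1)) (bb x r (i+1)) (-(hh x r (i+1))) (hh x r (i+1)))
          = sphArea (Complex.exp^[m])
              (rect (Real.exp (aa x r i))
                (Real.exp (bb x r i) - min (Real.exp (aa x r i) * hh x r i / 2) π)
                (-(min (Real.exp (aa x r i) * hh x r i / 2) π))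
                (min (Real.exp (aa x r i) * hh x r i / 2) π)) := by
            rw [aa_succ, bb_succ, hh_succ]
        _ ≤ sphArea (Complex.exp^[m + 1])
              (rect (aa x r i) (bb x r i) (-(hh x r i)) (hh x r i)) :=
            chain_step m hinv.1 hinv.2.2 hinv.2.1
        _ ≤ sphArea (Complex.exp^[m + (i + 1)])
              (rect (aa x r 0) (bb x r 0) (-(hh x r 0)) (hh x r 0)) := by
            have h2 := ih (m + 1)
            rwa [show m + 1 + i = m + (i + 1) from by omega] at h2

lemma rect0_subset {r : ℝ} (hr : 0 < r) (x : ℝ) :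
    rect (aa x r 0) (bb x r 0) (-(hh x r 0)) (hh x r 0) ⊆ Metric.ball (x:ℂ) r := by
  intro z hz
  obtain ⟨⟨h1, h2⟩, h3, h4⟩ := hz
  rw [aa_zero] at h1
  rw [bb_zero] at h2
  rw [hh_zero] at h3 h4
  rw [Metric.mem_ball, Complex.dist_eq]
  have hmin : min (r/2) π ≤ r/2 := min_le_left _ _
  have hre : (z - (x:ℂ)).re = z.re - x := by simp
  have him : (z - (x:ℂ)).im = z.im := by simp
  calc ‖z - (x:ℂ)‖ ≤ |(z - (x:ℂ)).re| + |(z - (x:ℂ)).im| :=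
        Complex.norm_le_abs_re_add_abs_im _
    _ < r := by
        rw [hre, him]
        have ha : |z.re - x| < r/2 := abs_lt.mpr ⟨by linarith, by linarith⟩
        have hb : |z.im| < r/2 := abs_lt.mpr ⟨by linarith, by linarith⟩
        linarith

lemma doubling {x r : ℝ} {K : ℕ} (hK : ∀ k, K ≤ k → hh x r k = π ∧ 4 ≤ aa x r k) :
    ∀ j : ℕ, 4 * (2:ℝ) ^ j ≤ aa x r (K + j) := by
  intro j
  induction j with
  | zero =>
      simpa using (hK K le_rfl).2
  | succ i ih =>
      have h1 : 4 ≤ aa x r (K + i) := (hK _ (Nat.le_add_right _ _)).2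
      have h2 : 2 * aa x r (K + i) ≤ Real.exp (aa x r (K + i)) :=
        two_mul_le_exp (by linarith)
      rw [show K + (i + 1) = (K + i) + 1 from rfl, aa_succ]
      rw [pow_succ]
      nlinarith

lemma sq_le_two_pow : ∀ j : ℕ, 4 ≤ j → ((j:ℝ))^2 ≤ 2 ^ j := by
  intro j hj
  induction j with
  | zero => omega
  | succ i ih =>
      rcases Nat.lt_or_ge i 4 with h4 | h4
      · interval_cases i
        · omega
        · omega
        · omega
        · push_cast; norm_num
      · have hi := ih (by omega)
        have hc : (4:ℝ) ≤ i := by exact_mod_cast h4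
        have hps : (2:ℝ) ^ (i+1) = 2 ^ i * 2 := pow_succ 2 i
        rw [hps]
        push_cast
        nlinarith

end SphAux

open SphAux

theorem stmt_3 (x : ℝ) (r : ℝ) (hr : 0 < r) :
    Tendsto
      (fun n : ℕ =>
        (1 / (n : ℝ)) * Real.log (sphArea (Complex.exp^[n]) (Metric.ball (x : ℂ) r)))
      atTop atTop := by
  rw [Filter.tendsto_atTop]
  intro C
  obtain ⟨K, hK⟩ := saturation (x := x) (r := r) hr
  set C' : ℝ := max C 1 with hC'def
  have hC'1 : (1:ℝ) ≤ C' := le_max_right _ _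
  have hCC' : C ≤ C' := le_max_left _ _
  set M : ℝ := C' * (K + 3) + 8 with hMdef
  have hM0 : 0 ≤ M := by positivity
  rw [Filter.eventually_atTop]
  refine ⟨K + 2 + max 4 (⌈M⌉₊ + 1), ?_⟩
  intro n hn
  set j : ℕ := n - (K + 2) with hjdef
  have hmax1 : 4 ≤ max 4 (⌈M⌉₊ + 1) := le_max_left _ _
  have hmax2 : ⌈M⌉₊ + 1 ≤ max 4 (⌈M⌉₊ + 1) := le_max_right _ _
  have hnj : n = j + (K + 2) := by omega
  have hj4 : 4 ≤ j := by omega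
  have hjM : M ≤ (j:ℝ) := by
    have h1 : ⌈M⌉₊ + 1 ≤ j := by omega
    calc M ≤ (⌈M⌉₊ : ℝ) := Nat.le_ceil M
      _ ≤ (j:ℝ) := by exact_mod_cast Nat.le_of_succ_le h1
  have hgrow : C' * n + 8 ≤ aa x r (K + j) := by
    have h1 : 4 * (2:ℝ) ^ j ≤ aa x r (K + j) := doubling hK j
    have h2 : ((j:ℝ))^2 ≤ 2 ^ j := sq_le_two_pow j hj4
    have hj1 : (4:ℝ) ≤ (j:ℝ) := by exact_mod_cast hj4
    have h3 : C' * n + 8 ≤ M * j := by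
      rw [hnj, hMdef]
      push_cast
      have hK0 : (0:ℝ) ≤ (K:ℝ) := Nat.cast_nonneg K
      have hC'0 : (0:ℝ) ≤ C' := by linarith
      have hjm1 : (0:ℝ) ≤ (j:ℝ) - 1 := by linarith
      nlinarith [mul_nonneg (mul_nonneg hjm1 hC'0) hK0, mul_nonneg hjm1 hC'0]
    have h4 : M * j ≤ ((j:ℝ))^2 := by nlinarith
    nlinarith
  set S : ℝ := sphArea (Complex.exp^[n]) (Metric.ball (x : ℂ) r) with hSdef
  have hball : Real.exp (aa x r (K + j) - 8) ≤ S := by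
    have hsat := hK (K + j) (Nat.le_add_right _ _)
    have hβ : aa x r (K + j) + 3 ≤ bb x r (K + j) := by
      have hinv := (invariants x hr (K + j)).2.2
      rw [hsat.1] at hinv
      linarith [Real.pi_gt_three]
    have hfin : Real.exp (aa x r (K + j) - 8)
        ≤ sphArea (Complex.exp^[2])
            (rect (aa x r (K + j)) (bb x r (K + j)) (-(hh x r (K + j))) (hh x r (K + j))) := by
      rw [hsat.1]
      exact sum_strips hsat.2 hβ
    have hchain := chain x hr (K + j) 2
    rw [show 2 + (K + j) = n from by omega] at hchain
    have hmono := sphArea_mono (contDiff_iter n) (rect0_subset hr x)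
      (Metric.ball_subset_closedBall (x := (x:ℂ)) (ε := r))
    exact le_trans hfin (le_trans hchain hmono)
  have hpos : 0 < S := lt_of_lt_of_le (Real.exp_pos _) hball
  have hlog : aa x r (K + j) - 8 ≤ Real.log S := (Real.le_log_iff_exp_le hpos).mpr hball
  have hn0 : (0:ℝ) < (n:ℝ) := by
    have : 1 ≤ n := by omega
    exact_mod_cast this
  have hfinal : C' ≤ (1 / (n:ℝ)) * Real.log S := by
    rw [one_div, inv_mul_eq_div, le_div_iff₀ hn0]
    linarith
  linarith
end

section
/- Let z₀ > 0 be a real number and let 0 < r < z₀/4. Then for every n ≥ 1, the supremum of |exp^n(w)| over the closed disk {w ∈ ℂ : |w − z₀| ≤ r} equals exp^n(z₀ + r), the n-th iterate of the (real) exponential function evaluated at z₀ + r. -/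
lemma iter_exp_real (n : ℕ) (x : ℝ) :
    Complex.exp^[n] (x : ℂ) = (Real.exp^[n] x : ℂ) := by
  induction n with
  | zero => simp
  | succ n ih =>
    rw [Function.iterate_succ_apply', Function.iterate_succ_apply', ih,
      ← Complex.ofReal_exp]

lemma iter_exp_norm_le (n : ℕ) (w : ℂ) :
    ‖Complex.exp^[n] w‖ ≤ Real.exp^[n] ‖w‖ := by
  induction n with
  | zero => simp
  | succ n ih =>
    rw [Function.iterate_succ_apply', Function.iterate_succ_apply']
    calc ‖Complex.exp (Complex.exp^[n] w)‖ = Real.exp (Complex.exp^[n] w).re := by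
          rw [Complex.norm_exp]
      _ ≤ Real.exp ‖Complex.exp^[n] w‖ :=
          Real.exp_le_exp.mpr (Complex.re_le_norm _)
      _ ≤ Real.exp (Real.exp^[n] ‖w‖) := Real.exp_le_exp.mpr ih

theorem stmt_4 (z₀ : ℝ) (hz₀ : 0 < z₀) (r : ℝ) (hr : 0 < r) (hr' : r < z₀ / 4)
    (n : ℕ) (hn : 1 ≤ n) :
    sSup ((fun w : ℂ => ‖Complex.exp^[n] w‖) '' Metric.closedBall (z₀ : ℂ) r)
      = Real.exp^[n] (z₀ + r) := by
  apply IsGreatest.csSup_eq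
  constructor
  · refine ⟨((z₀ + r : ℝ) : ℂ), ?_, ?_⟩
    · simp only [Metric.mem_closedBall, Complex.dist_eq]
      push_cast
      simp [abs_of_nonneg hr.le]
    · have pos : 0 < Real.exp^[n] (z₀ + r) := by
        cases n with
        | zero => simpa using by linarith
        | succ m => rw [Function.iterate_succ_apply']; exact Real.exp_pos _
      show ‖Complex.exp^[n] ((z₀ + r : ℝ) : ℂ)‖ = _
      rw [iter_exp_real]
      simp [abs_of_pos pos]
  · rintro x ⟨w, hw, rfl⟩
    have hwn : ‖w‖ ≤ z₀ + r := by
      calc ‖w‖ = ‖(w - z₀) + z₀‖ := by ring_nf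
        _ ≤ ‖w - (z₀ : ℂ)‖ + ‖(z₀ : ℂ)‖ := norm_add_le _ _
        _ ≤ r + z₀ := by
            have := Metric.mem_closedBall.mp hw
            rw [Complex.dist_eq] at this
            simp [abs_of_pos hz₀]
            linarith
        _ = z₀ + r := by ring
    calc ‖Complex.exp^[n] w‖ ≤ Real.exp^[n] ‖w‖ := iter_exp_norm_le n w
      _ ≤ Real.exp^[n] (z₀ + r) :=
          (Real.exp_monotone.iterate n) hwn
end

section
/- Let f be a transcendental entire function. There exists R(f) > 0 such that for any two points z₀, z₁ ∈ ℂ with |z₁| > |z₀| ≥ R(f), one has (1/n) · log log ( M^n(|z₁|,f) / M^n(|z₀|,f) ) → +∞ as n → ∞. -/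
open Filter

/-- The maximum modulus `M(r, f) = max_{|z| = r} |f z|`. -/
noncomputable def maxMod (f : ℂ → ℂ) (r : ℝ) : ℝ :=
  sSup ((fun z => ‖f z‖) '' Metric.sphere (0 : ℂ) r)

namespace MaxModAux

variable {f : ℂ → ℂ}

lemma maxMod_bddAbove (hf : Differentiable ℂ f) (r : ℝ) :
    BddAbove ((fun z => ‖f z‖) '' Metric.sphere (0 : ℂ) r) :=
  ((isCompact_sphere 0 r).image (continuous_norm.comp hf.continuous)).bddAbove

lemma norm_le_maxMod (hf : Differentiable ℂ f) {z : ℂ} {r : ℝ} (hz : ‖z‖ = r) :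
    ‖f z‖ ≤ maxMod f r :=
  le_csSup (maxMod_bddAbove hf r) ⟨z, by simpa [Metric.mem_sphere] using hz, rfl⟩

lemma maxMod_le {r C : ℝ} (hC : 0 ≤ C)
    (h : ∀ z : ℂ, ‖z‖ = r → ‖f z‖ ≤ C) : maxMod f r ≤ C := by
  apply Real.sSup_le _ hC
  rintro x ⟨z, hz, rfl⟩
  exact h z (by simpa [Metric.mem_sphere] using hz)

lemma maxMod_nonneg (hf : Differentiable ℂ f) {r : ℝ} (hr : 0 ≤ r) : 0 ≤ maxMod f r := by
  obtain ⟨z, hz⟩ := (NormedSpace.sphere_nonempty (x := (0:ℂ)) (r := r)).2 hr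
  exact le_trans (norm_nonneg (f z)) (norm_le_maxMod hf (by simpa using hz))

/-- Maximum modulus principle form. -/
lemma norm_le_maxMod_of_le (hf : Differentiable ℂ f) {z : ℂ} {r : ℝ} (hr : 0 < r)
    (hz : ‖z‖ ≤ r) : ‖f z‖ ≤ maxMod f r := by
  refine Complex.norm_le_of_forall_mem_frontier_norm_le (U := Metric.ball (0:ℂ) r)
    Metric.isBounded_ball hf.diffContOnCl (fun w hw => ?_) ?_
  · rw [frontier_ball _ hr.ne'] at hw
    exact norm_le_maxMod hf (by simpa using hw)
  · rw [closure_ball _ hr.ne']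
    simpa using hz

lemma cps_eq (hf : Differentiable ℂ f) {r : ℝ} (hr : 0 < r) :
    cauchyPowerSeries f 0 1 = cauchyPowerSeries f 0 r := by
  have h1 : HasFPowerSeriesAt f (cauchyPowerSeries f 0 1) 0 :=
    (hf.hasFPowerSeriesOnBall 0 one_pos).hasFPowerSeriesAt
  have h2 : HasFPowerSeriesAt f (cauchyPowerSeries f 0 r.toNNReal) 0 :=
    (hf.hasFPowerSeriesOnBall 0 (by simpa using hr.le.lt_of_ne' (by simpa using hr.ne') :
      (0:NNReal) < r.toNNReal)).hasFPowerSeriesAt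
  have := h1.eq_formalMultilinearSeries h2
  rwa [Real.coe_toNNReal r hr.le] at this

lemma coeff_mul_pow_le (hf : Differentiable ℂ f) (m : ℕ) {r : ℝ} (hr : 0 < r) :
    ‖(cauchyPowerSeries f 0 1).coeff m‖ * r ^ m ≤ maxMod f r := by
  have key : ‖(cauchyPowerSeries f 0 r) m‖ ≤
      ((2 * Real.pi)⁻¹ * ∫ θ : ℝ in (0)..2 * Real.pi, ‖f (circleMap 0 r θ)‖) * |r|⁻¹ ^ m :=
    norm_cauchyPowerSeries_le f 0 r m
  have hint : (∫ θ : ℝ in (0)..2 * Real.pi, ‖f (circleMap 0 r θ)‖) ≤ 2 * Real.pi * maxMod f r := by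
    have : (∫ θ : ℝ in (0)..2 * Real.pi, ‖f (circleMap 0 r θ)‖) ≤
        ∫ _ : ℝ in (0)..2 * Real.pi, maxMod f r := by
      apply intervalIntegral.integral_mono_on Real.two_pi_pos.le
      · exact ((hf.continuous.comp (continuous_circleMap 0 r)).norm).intervalIntegrable _ _
      · exact intervalIntegrable_const
      · intro θ _
        exact norm_le_maxMod hf (by simp [norm_circleMap_zero, abs_of_pos hr])
    simpa [mul_comm] using this
  have hc : ‖(cauchyPowerSeries f 0 1).coeff m‖ ≤ ‖(cauchyPowerSeries f 0 r) m‖ := by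
    rw [cps_eq hf hr]
    calc ‖(cauchyPowerSeries f 0 r).coeff m‖
        ≤ ‖(cauchyPowerSeries f 0 r) m‖ * ∏ _i : Fin m, ‖(1:ℂ)‖ :=
          ContinuousMultilinearMap.le_opNorm _ _
      _ = ‖(cauchyPowerSeries f 0 r) m‖ := by simp
  have h2 : ‖(cauchyPowerSeries f 0 1).coeff m‖ ≤ maxMod f r * (r⁻¹) ^ m := by
    refine le_trans hc (le_trans key ?_)
    rw [abs_of_pos hr]
    have h3 : (2 * Real.pi)⁻¹ * (2 * Real.pi * maxMod f r) = maxMod f r := by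
      field_simp
    refine mul_le_mul_of_nonneg_right ?_ (by positivity)
    calc (2 * Real.pi)⁻¹ * ∫ θ : ℝ in (0)..2 * Real.pi, ‖f (circleMap 0 r θ)‖
        ≤ (2 * Real.pi)⁻¹ * (2 * Real.pi * maxMod f r) :=
          mul_le_mul_of_nonneg_left hint (by positivity)
      _ = maxMod f r := h3
  calc ‖(cauchyPowerSeries f 0 1).coeff m‖ * r ^ m
      ≤ (maxMod f r * (r⁻¹) ^ m) * r ^ m := mul_le_mul_of_nonneg_right h2 (by positivity)
    _ = maxMod f r := by
        rw [mul_assoc, ← mul_pow, inv_mul_cancel₀ hr.ne', one_pow, mul_one]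

lemma hasSum_coeff (hf : Differentiable ℂ f) (z : ℂ) :
    HasSum (fun n => (cauchyPowerSeries f 0 1).coeff n * z ^ n) (f z) := by
  have h := (hf.hasFPowerSeriesOnBall 0 one_pos).hasSum (y := z)
    (by simp [EMetric.mem_ball])
  simp only [zero_add] at h
  convert h using 2 with n
  · rfl
  rw [FormalMultilinearSeries.apply_eq_pow_smul_coeff, smul_eq_mul, mul_comm]
  norm_num

lemma exists_big_coeff (hf : Differentiable ℂ f)
    (htrans : ¬ ∃ p : Polynomial ℂ, ∀ z, f z = p.eval z) (k : ℕ) :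
    ∃ m, k ≤ m ∧ (cauchyPowerSeries f 0 1).coeff m ≠ 0 := by
  by_contra h
  push_neg at h
  apply htrans
  refine ⟨∑ m ∈ Finset.range k,
    Polynomial.C ((cauchyPowerSeries f 0 1).coeff m) * Polynomial.X ^ m, fun z => ?_⟩
  have hs := hasSum_coeff hf z
  have := hs.tsum_eq
  rw [tsum_eq_sum (s := Finset.range k) (fun m hm => by
    rw [h m (by simpa using hm), zero_mul])] at this
  rw [← this]
  simp [Polynomial.eval_finset_sum]

/-- For every `k` there is `R ≥ 1` with `r ^ k ≤ M(r)` for `r ≥ R`. -/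
lemma maxMod_ge_pow (hf : Differentiable ℂ f)
    (htrans : ¬ ∃ p : Polynomial ℂ, ∀ z, f z = p.eval z)
    (k : ℕ) : ∃ R : ℝ, 1 ≤ R ∧ ∀ r : ℝ, R ≤ r → r ^ k ≤ maxMod f r := by
  obtain ⟨m, hm, hcne⟩ := exists_big_coeff hf htrans (k + 1)
  set ε := ‖(cauchyPowerSeries f 0 1).coeff m‖ with hε
  have hε0 : 0 < ε := norm_pos_iff.2 hcne
  refine ⟨max 1 ε⁻¹, le_max_left _ _, fun r hr => ?_⟩
  have hr1 : (1:ℝ) ≤ r := le_trans (le_max_left _ _) hr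
  have hrε : ε⁻¹ ≤ r := le_trans (le_max_right _ _) hr
  have hr0 : 0 < r := lt_of_lt_of_le one_pos hr1
  calc r ^ k = 1 * r ^ k := (one_mul _).symm
    _ ≤ (ε * r) * r ^ k := by
        refine mul_le_mul_of_nonneg_right ?_ (by positivity)
        rw [← mul_inv_cancel₀ hε0.ne']
        exact mul_le_mul_of_nonneg_left hrε hε0.le
    _ = ε * r ^ (k + 1) := by ring
    _ ≤ ε * r ^ m := mul_le_mul_of_nonneg_left (pow_le_pow_right₀ hr1 hm) hε0.le
    _ ≤ maxMod f r := coeff_mul_pow_le hf m hr0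

/-- Hadamard three-circles. -/
lemma three_circles (hf : Differentiable ℂ f) {a b x : ℝ} (hab : a < b)
    (hax : a ≤ x) (hxb : x ≤ b) :
    maxMod f (Real.exp x) ≤
      maxMod f (Real.exp a) ^ ((b - x) / (b - a)) *
        maxMod f (Real.exp b) ^ ((x - a) / (b - a)) := by
  set G : ℂ → ℂ := fun z => f (Complex.exp (a + (b - a) * z)) with hG
  have hGd : Differentiable ℂ G :=
    hf.comp ((differentiable_const _).add ((differentiable_const _).mul differentiable_id)).cexp
  obtain ⟨C, hC⟩ : ∃ C, ∀ w ∈ Metric.closedBall (0:ℂ) (Real.exp b), ‖f w‖ ≤ C :=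
    (isCompact_closedBall (0:ℂ) (Real.exp b)).exists_bound_of_continuousOn
      hf.continuous.continuousOn
  have habs : ∀ z : ℂ, ‖(Complex.exp (a + (b - a) * z))‖ =
      Real.exp (a + (b - a) * z.re) := by
    intro z
    rw [Complex.norm_exp]
    congr 1
    simp [Complex.add_re, Complex.mul_re]
  have hB : BddAbove ((norm ∘ G) '' Complex.HadamardThreeLines.verticalClosedStrip 0 1) := by
    refine ⟨C, ?_⟩
    rintro y ⟨z, hz, rfl⟩
    refine hC (Complex.exp (a + (b - a) * z)) ?_
    simp only [Metric.mem_closedBall, dist_zero_right, habs]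
    rw [Real.exp_le_exp]
    obtain ⟨hz0, hz1⟩ := hz
    nlinarith [hz0, hz1, hab]
  have key : ∀ z : ℂ, z.re ∈ Set.Icc (0:ℝ) 1 →
      ‖G z‖ ≤ maxMod f (Real.exp a) ^ (1 - z.re) * maxMod f (Real.exp b) ^ z.re := by
    intro z hz
    refine Complex.HadamardThreeLines.norm_le_interp_of_mem_verticalClosedStrip₀₁' G hz
      hGd.diffContOnCl hB ?_ ?_
    · intro w hw
      refine norm_le_maxMod hf ?_
      simp only [habs, Set.mem_preimage, Set.mem_singleton_iff] at *
      rw [hw]; ring_nf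
    · intro w hw
      refine norm_le_maxMod hf ?_
      simp only [habs, Set.mem_preimage, Set.mem_singleton_iff] at *
      rw [hw]; ring_nf
  have hba : (0:ℝ) < b - a := by linarith
  refine maxMod_le (mul_nonneg (Real.rpow_nonneg (maxMod_nonneg hf (Real.exp_pos a).le) _)
    (Real.rpow_nonneg (maxMod_nonneg hf (Real.exp_pos b).le) _)) ?_
  intro w hw
  have hw0 : w ≠ 0 := by
    intro h; rw [h] at hw; simp at hw
    exact absurd hw.symm (Real.exp_pos x).ne'
  set ζ := Complex.log w with hζ
  have hba' : ((b:ℂ) - (a:ℂ)) ≠ 0 := by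
    rw [sub_ne_zero]
    exact_mod_cast hab.ne'
  have hζre : ζ.re = x := by
    rw [hζ, Complex.log_re, hw, Real.log_exp]
  set z : ℂ := (ζ - a) / (b - a) with hz
  have hzre : z.re = (x - a) / (b - a) := by
    rw [hz, show ((b:ℂ) - (a:ℂ)) = (((b - a : ℝ)):ℂ) by push_cast; ring,
      Complex.div_ofReal_re, Complex.sub_re, hζre, Complex.ofReal_re]
  have hmem : z.re ∈ Set.Icc (0:ℝ) 1 := by
    rw [hzre]
    constructor
    · exact div_nonneg (by linarith) hba.le
    · rw [div_le_one hba]; linarith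
  have hGz : G z = f w := by
    show f (Complex.exp ((a:ℂ) + ((b:ℂ) - (a:ℂ)) * z)) = f w
    have h9 : (a : ℂ) + ((b:ℂ) - (a:ℂ)) * z = ζ := by
      rw [hz, mul_comm, div_mul_cancel₀ _ hba']
      ring
    rw [h9, hζ, Complex.exp_log hw0]
  have hkey := key z hmem
  rw [hGz, hzre] at hkey
  have hre : 1 - (x - a)/(b - a) = (b - x)/(b - a) := by
    field_simp
    ring
  rwa [hre] at hkey

/-- Slope lemma: beyond some radius the log-log slope of `M` exceeds `k`. -/
lemma slope (hf : Differentiable ℂ f)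
    (htrans : ¬ ∃ p : Polynomial ℂ, ∀ z, f z = p.eval z)
    (k : ℕ) (hk : 1 ≤ k) : ∃ Rk : ℝ, 2 ≤ Rk ∧ ∀ s t : ℝ, Rk ≤ s → s < t →
      Real.log (maxMod f s) + k * (Real.log t - Real.log s) ≤ Real.log (maxMod f t) := by
  obtain ⟨R1, hR1a, hR1⟩ := maxMod_ge_pow hf htrans 2
  obtain ⟨R2, hR2a, hR2⟩ := maxMod_ge_pow hf htrans (k + 1)
  set A := Real.log (maxMod f R1) with hA
  refine ⟨max (max (R1 + 1) R2) (max 2 (Real.exp A)), le_trans (le_max_left _ _) (le_max_right _ _),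
    fun s t hs hst => ?_⟩
  have hsR1 : R1 + 1 ≤ s := le_trans (le_trans (le_max_left _ _) (le_max_left _ _)) hs
  have hsR2 : R2 ≤ s := le_trans (le_trans (le_max_right _ _) (le_max_left _ _)) hs
  have hs2 : 2 ≤ s := le_trans (le_trans (le_max_left _ _) (le_max_right _ _)) hs
  have hsA : Real.exp A ≤ s := le_trans (le_trans (le_max_right _ _) (le_max_right _ _)) hs
  have hR10 : (0:ℝ) < R1 := lt_of_lt_of_le one_pos hR1a
  have hs0 : (0:ℝ) < s := by linarith
  have ht0 : (0:ℝ) < t := by linarith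
  -- positivity of the maxMods
  have hMR1 : (1:ℝ) ≤ maxMod f R1 := le_trans (by nlinarith) (hR1 R1 le_rfl)
  have hMs : (1:ℝ) ≤ maxMod f s := le_trans (by nlinarith) (hR1 s (by linarith))
  have hMt : (1:ℝ) ≤ maxMod f t := le_trans (by nlinarith) (hR1 t (by linarith))
  have hA0 : 0 ≤ A := Real.log_nonneg hMR1
  -- logs of radii
  set α := Real.log R1 with hα
  set σ := Real.log s with hσ
  set τ := Real.log t with hτ
  have hασ : α < σ := Real.log_lt_log hR10 (by linarith)
  have hστ : σ < τ := Real.log_lt_log hs0 hst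
  have hα0 : 0 ≤ α := Real.log_nonneg hR1a
  have hAσ : A ≤ σ := by
    rw [hσ, ← Real.log_exp A]
    exact Real.log_le_log (Real.exp_pos A) hsA
  -- three circles at radii R1 < s < t
  have h3 := three_circles hf (a := α) (b := τ) (x := σ) (by linarith) hασ.le hστ.le
  rw [Real.exp_log hR10, Real.exp_log hs0, Real.exp_log ht0] at h3
  -- take logs
  have hMlog : Real.log (maxMod f s) ≤
      (τ - σ)/(τ - α) * A + (σ - α)/(τ - α) * Real.log (maxMod f t) := by
    have := Real.log_le_log (by positivity) h3
    rwa [Real.log_mul (by positivity) (by positivity),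
      Real.log_rpow (by linarith : (0:ℝ) < maxMod f R1),
      Real.log_rpow (by linarith : (0:ℝ) < maxMod f t), ← hA] at this
  -- lower bound for log M t
  have hTbig : A + (k:ℝ) * (τ - α) ≤ Real.log (maxMod f t) := by
    have h1 : ((k:ℝ) + 1) * τ ≤ Real.log (maxMod f t) := by
      have := hR2 t (by linarith)
      have h2 := Real.log_le_log (by positivity) this
      rwa [Real.log_pow, Nat.cast_add, Nat.cast_one] at h2
    have hk1 : (1:ℝ) ≤ (k:ℝ) := by exact_mod_cast hk
    nlinarith [hAσ, hστ, hα0, hk1]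
  -- algebra
  set T := Real.log (maxMod f t) with hT
  set L := Real.log (maxMod f s) with hL
  have hD : (0:ℝ) < τ - α := by linarith
  set lam := (σ - α)/(τ - α) with hlam
  have hlam1 : (τ - σ)/(τ - α) = 1 - lam := by
    rw [hlam]; field_simp
    ring
  have hlam0 : 0 < 1 - lam := by
    rw [← hlam1]; exact div_pos (by linarith) hD
  have hlamD : (1 - lam) * (τ - α) = τ - σ := by
    rw [← hlam1]; field_simp
  rw [hlam1] at hMlog
  -- L ≤ (1-lam) A + lam T ; T - A ≥ k (τ - α) ; want L + k(τ-σ) ≤ T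
  have hlamlt : lam < 1 := by linarith
  nlinarith [mul_le_mul_of_nonneg_left (by linarith : (k:ℝ) * (τ - α) ≤ T - A) hlam0.le,
    hlamD, hMlog]

end MaxModAux

open MaxModAux

theorem stmt_6 (f : ℂ → ℂ) (hf : Differentiable ℂ f)
    (htrans : ¬ ∃ p : Polynomial ℂ, ∀ z, f z = p.eval z) :
    ∃ R > 0, ∀ z₀ z₁ : ℂ, R ≤ ‖z₀‖ → ‖z₀‖ < ‖z₁‖ →
      Tendsto
        (fun n : ℕ =>
          (1 / (n : ℝ)) *
            Real.log (Real.log ((maxMod f)^[n] ‖z₁‖ / (maxMod f)^[n] ‖z₀‖)))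
        atTop atTop := by
  obtain ⟨R2, hR2a, hR2⟩ := maxMod_ge_pow hf htrans 2
  obtain ⟨S1, hS1a, hS1⟩ := slope hf htrans 1 le_rfl
  set R := max R2 S1 with hR
  have hR2' : (2:ℝ) ≤ R := le_trans hS1a (le_max_right _ _)
  have hR0 : (0:ℝ) < R := by linarith
  refine ⟨R, hR0, fun z₀ z₁ hz₀ hz₀₁ => ?_⟩
  set s := ‖z₀‖ with hs
  set t := ‖z₁‖ with ht
  -- basic step facts
  have step : ∀ u : ℝ, R ≤ u → u ≤ maxMod f u ∧ R ≤ maxMod f u ∧ 2 * u ≤ maxMod f u := by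
    intro u hu
    have hu2 : (2:ℝ) ≤ u := le_trans hR2' hu
    have h := hR2 u (le_trans (le_max_left _ _) hu)
    refine ⟨by nlinarith, by nlinarith, by nlinarith⟩
  have strict : ∀ u v : ℝ, R ≤ u → u < v → maxMod f u < maxMod f v := by
    intro u v hu huv
    have h := hS1 u v (le_trans (le_max_right _ _) hu) huv
    have hu0 : (0:ℝ) < u := by linarith
    have hlog : Real.log (maxMod f u) < Real.log (maxMod f v) := by
      have := Real.log_lt_log hu0 huv
      push_cast at h
      linarith
    have hMu : (0:ℝ) < maxMod f u := by
      have := (step u hu).1; linarith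
    have hMv : (0:ℝ) < maxMod f v := by
      have h2 := hR2 v (le_trans (le_max_left _ _) (by linarith : R ≤ v))
      nlinarith
    calc maxMod f u = Real.exp (Real.log (maxMod f u)) := (Real.exp_log hMu).symm
      _ < Real.exp (Real.log (maxMod f v)) := Real.exp_lt_exp.2 hlog
      _ = maxMod f v := Real.exp_log hMv
  set sn : ℕ → ℝ := fun n => (maxMod f)^[n] s with hsnd
  set tn : ℕ → ℝ := fun n => (maxMod f)^[n] t with htnd
  have hsn_succ : ∀ n, sn (n+1) = maxMod f (sn n) := fun n =>
    Function.iterate_succ_apply' _ _ _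
  have htn_succ : ∀ n, tn (n+1) = maxMod f (tn n) := fun n =>
    Function.iterate_succ_apply' _ _ _
  have inv : ∀ n, R ≤ sn n ∧ sn n < tn n := by
    intro n
    induction n with
    | zero => exact ⟨hz₀, hz₀₁⟩
    | succ n ih =>
      refine ⟨?_, ?_⟩
      · rw [hsn_succ]; exact (step _ ih.1).2.1
      · rw [hsn_succ, htn_succ]; exact strict _ _ ih.1 ih.2
  have mono : Monotone sn := monotone_nat_of_le_succ (fun n => by
    rw [hsn_succ]; exact (step _ (inv n).1).1)
  have grow : ∀ n, (2:ℝ)^n ≤ sn n := by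
    intro n
    induction n with
    | zero =>
      simp only [pow_zero]
      show (1:ℝ) ≤ s
      linarith
    | succ n ih =>
      rw [hsn_succ, pow_succ]
      have h1 := (step _ (inv n).1).2.2
      have h2 : (0:ℝ) < sn n := lt_of_lt_of_le hR0 (inv n).1
      nlinarith
  rw [tendsto_atTop]
  intro b
  set k : ℕ := max 1 ⌈Real.exp (b+1)⌉₊ with hkdef
  have hk1 : 1 ≤ k := le_max_left _ _
  have hkR : (0:ℝ) < (k:ℝ) := by exact_mod_cast hk1
  have hklog : b + 1 ≤ Real.log k := by
    rw [← Real.log_exp (b+1)]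
    apply Real.log_le_log (Real.exp_pos _)
    calc Real.exp (b+1) ≤ (⌈Real.exp (b+1)⌉₊ : ℝ) := Nat.le_ceil _
      _ ≤ (k:ℝ) := by exact_mod_cast le_max_right 1 ⌈Real.exp (b+1)⌉₊
  obtain ⟨Rk, hRk2, hRkslope⟩ := slope hf htrans k hk1
  obtain ⟨N, hN⟩ : ∃ N : ℕ, Rk ≤ (2:ℝ)^N := by
    obtain ⟨N, hN⟩ := pow_unbounded_of_one_lt Rk (one_lt_two (α := ℝ))
    exact ⟨N, hN.le⟩
  have hsnN : Rk ≤ sn N := le_trans hN (grow N)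
  set d := Real.log (tn N) - Real.log (sn N) with hd
  have hd0 : 0 < d := sub_pos.2 (Real.log_lt_log (lt_of_lt_of_le hR0 (inv N).1) (inv N).2)
  have key : ∀ j, (k:ℝ)^j * d ≤ Real.log (tn (N+j)) - Real.log (sn (N+j)) := by
    intro j
    induction j with
    | zero =>
      simp only [pow_zero, one_mul, Nat.add_zero]
      exact le_of_eq hd
    | succ j ih =>
      have hu : Rk ≤ sn (N+j) := le_trans hsnN (mono (Nat.le_add_right N j))
      have huv := (inv (N+j)).2
      have h := hRkslope (sn (N+j)) (tn (N+j)) hu huv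
      have h2 : (k:ℝ) * ((k:ℝ)^j * d) ≤
          (k:ℝ) * (Real.log (tn (N+j)) - Real.log (sn (N+j))) :=
        mul_le_mul_of_nonneg_left ih hkR.le
      rw [show N + (j+1) = (N+j)+1 by omega, hsn_succ, htn_succ]
      calc (k:ℝ)^(j+1) * d = (k:ℝ) * ((k:ℝ)^j * d) := by ring
        _ ≤ (k:ℝ) * (Real.log (tn (N+j)) - Real.log (sn (N+j))) := h2
        _ ≤ Real.log (maxMod f (tn (N+j))) - Real.log (maxMod f (sn (N+j))) := by linarith
  refine eventually_atTop.2 ⟨max N (max 1 ⌈(N:ℝ)*(b+1) - Real.log d⌉₊), fun n hn => ?_⟩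
  have hnN : N ≤ n := le_trans (le_max_left _ _) hn
  have hn1 : 1 ≤ n := le_trans (le_trans (le_max_left _ _) (le_max_right _ _)) hn
  have hn2 : (N:ℝ)*(b+1) - Real.log d ≤ n := by
    calc (N:ℝ)*(b+1) - Real.log d ≤ (⌈(N:ℝ)*(b+1) - Real.log d⌉₊ : ℝ) := Nat.le_ceil _
      _ ≤ (n:ℝ) := by
          exact_mod_cast le_trans (le_trans (le_max_right _ _) (le_max_right _ _)) hn
  have hsnpos : 0 < sn n := lt_of_lt_of_le hR0 (inv n).1
  have htnpos : 0 < tn n := lt_trans hsnpos (inv n).2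
  have hkd : (k:ℝ)^(n-N) * d ≤ Real.log (tn n / sn n) := by
    rw [Real.log_div htnpos.ne' hsnpos.ne']
    have h := key (n - N)
    rwa [Nat.add_sub_cancel' hnN] at h
  have hkdpos : 0 < (k:ℝ)^(n-N) * d := by positivity
  have hloglog : ((n - N:ℕ):ℝ) * Real.log k + Real.log d ≤
      Real.log (Real.log (tn n / sn n)) := by
    have h := Real.log_le_log hkdpos hkd
    rwa [Real.log_mul (by positivity) hd0.ne', Real.log_pow] at h
  have hn0 : (0:ℝ) < (n:ℝ) := by exact_mod_cast hn1
  show b ≤ 1/(n:ℝ) * Real.log (Real.log (tn n / sn n))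
  rw [one_div, inv_mul_eq_div, le_div_iff₀ hn0]
  have hcast : ((n - N : ℕ):ℝ) = (n:ℝ) - (N:ℝ) := by
    rw [Nat.cast_sub hnN]
  have hnNn : (0:ℝ) ≤ (n:ℝ) - (N:ℝ) := by
    rw [← hcast]; positivity
  have hmul : ((n:ℝ) - (N:ℝ)) * (b+1) ≤ ((n:ℝ) - (N:ℝ)) * Real.log k :=
    mul_le_mul_of_nonneg_left hklog hnNn
  calc b * (n:ℝ) ≤ ((n - N:ℕ):ℝ) * Real.log k + Real.log d := by
        rw [hcast]; nlinarith
    _ ≤ Real.log (Real.log (tn n / sn n)) := hloglog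
end
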